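/- Let k₁, k₂ ∈ ℝ and θ₂, θ₃ > 0. Let D = diag(1, θ₂, θ₃), A = D·K·D⁻¹ and M = Aᵀ·A. Then for every λ ∈ ℝ, det(λ·I₃ − M) = λ·(λ² − β·λ + γ), where β = 4k₁² + θ₂² + θ₂⁻² + θ₃² + k₂²·θ₃⁻² and γ = 1 + θ₂⁻²·θ₃² + k₂² + k₂²·θ₂²·θ₃⁻². -/

import Mathlib

set_option maxHeartbeats 1600000


/-- The boundary coupling matrix `K`. -/
def Kmat (k₁ k₂ : ℝ) : Matrix (Fin 3) (Fin 3) ℝ :=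
  !![-2 * k₁, 1, -k₂; 1, 0, 0; 1, 0, 0]

theorem stmt_7 (k₁ k₂ θ₂ θ₃ : ℝ) (hθ₂ : 0 < θ₂) (hθ₃ : 0 < θ₃)
    (D : Matrix (Fin 3) (Fin 3) ℝ) (hD : D = Matrix.diagonal ![1, θ₂, θ₃])
    (A : Matrix (Fin 3) (Fin 3) ℝ) (hA : A = D * Kmat k₁ k₂ * D⁻¹)
    (M : Matrix (Fin 3) (Fin 3) ℝ) (hM : M = A.transpose * A)
    (β γ : ℝ)
    (hβ : β = 4 * k₁ ^ 2 + (θ₂ ^ 2 + (θ₂ ^ 2)⁻¹) + (θ₃ ^ 2 + k₂ ^ 2 * (θ₃ ^ 2)⁻¹))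
    (hγ : γ = 1 + (θ₂ ^ 2)⁻¹ * θ₃ ^ 2 + k₂ ^ 2 + k₂ ^ 2 * θ₂ ^ 2 * (θ₃ ^ 2)⁻¹) :
    ∀ lam : ℝ, (lam • (1 : Matrix (Fin 3) (Fin 3) ℝ) - M).det =
      lam * (lam ^ 2 - β * lam + γ) := by
  intro lam
  have hθ₂' : θ₂ ≠ 0 := ne_of_gt hθ₂
  have hθ₃' : θ₃ ≠ 0 := ne_of_gt hθ₃
  have hDinv : D⁻¹ = Matrix.diagonal ![1, θ₂⁻¹, θ₃⁻¹] := by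
    apply Matrix.inv_eq_right_inv
    rw [hD, Matrix.diagonal_mul_diagonal]
    ext i j
    fin_cases i <;> fin_cases j <;>
      simp [Matrix.diagonal, Matrix.one_apply, mul_inv_cancel₀, hθ₂', hθ₃']
  have hA' : A = !![-2 * k₁, θ₂⁻¹, -k₂ * θ₃⁻¹; θ₂, 0, 0; θ₃, 0, 0] := by
    rw [hA, hDinv, hD, Kmat]
    ext i j
    fin_cases i <;> fin_cases j <;>
      simp [Matrix.mul_apply, Fin.sum_univ_three, Matrix.diagonal, Matrix.vecHead, Matrix.vecTail] <;> ring
  have hM' : M = !![4 * k₁ ^ 2 + θ₂ ^ 2 + θ₃ ^ 2, -2 * k₁ * θ₂⁻¹, 2 * k₁ * k₂ * θ₃⁻¹;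
      -2 * k₁ * θ₂⁻¹, θ₂⁻¹ ^ 2, -θ₂⁻¹ * k₂ * θ₃⁻¹;
      2 * k₁ * k₂ * θ₃⁻¹, -θ₂⁻¹ * k₂ * θ₃⁻¹, k₂ ^ 2 * θ₃⁻¹ ^ 2] := by
    rw [hM, hA']
    ext i j
    fin_cases i <;> fin_cases j <;>
      simp [Matrix.mul_apply, Fin.sum_univ_three, Matrix.transpose_apply, Matrix.vecHead, Matrix.vecTail] <;> ring
  have hN : lam • (1 : Matrix (Fin 3) (Fin 3) ℝ) - M =
      !![lam - (4 * k₁ ^ 2 + θ₂ ^ 2 + θ₃ ^ 2), 2 * k₁ * θ₂⁻¹, -(2 * k₁ * k₂ * θ₃⁻¹);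
        2 * k₁ * θ₂⁻¹, lam - θ₂⁻¹ ^ 2, θ₂⁻¹ * k₂ * θ₃⁻¹;
        -(2 * k₁ * k₂ * θ₃⁻¹), θ₂⁻¹ * k₂ * θ₃⁻¹, lam - k₂ ^ 2 * θ₃⁻¹ ^ 2] := by
    rw [hM']
    ext i j
    fin_cases i <;> fin_cases j <;>
      simp [Matrix.one_apply, Matrix.vecHead, Matrix.vecTail] <;> ring
  rw [hN, Matrix.det_fin_three]
  simp only [Matrix.cons_val', Matrix.cons_val_zero, Matrix.cons_val_one, Matrix.head_cons,
    Matrix.empty_val', Matrix.cons_val_fin_one, Matrix.head_fin_const, Matrix.of_apply, Matrix.cons_val]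
  rw [hβ, hγ]
  field_simp
  ring
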